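/- Let H be a complex Hilbert space, P and Q orthogonal projections on H with ranges M and N, and suppose the subgroup Γ of invertible bounded operators on H generated by the self-adjoint unitaries 2P − 1 and 2Q − 1 is finite. Then the sequence (PQ)ⁿ converges in operator norm to the orthogonal projection Π := P_{M∩N} onto M ∩ N, the orthogonal projection Π equals the average (1/|Γ|) ∑_{γ ∈ Γ} γ, and H = (M ∩ N) ⊕ (M⊥ + N⊥). -/

import Mathlib

open Filter Topology Polynomial

section Stmt12Aux

variable {H : Type*} [NormedAddCommGroup H] [InnerProductSpace ℂ H] [CompleteSpace H]

lemma aux_selfadj_nilpotent {K : H →L[ℂ] H} (h : IsSelfAdjoint K) {k : ℕ}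
    (hk : K ^ k = 0) : K = 0 := by
  have key : ∀ n : ℕ, ‖K ^ (2 ^ n)‖ = ‖K‖ ^ (2 ^ n) := by
    intro n
    induction n with
    | zero => simp
    | succ n ih =>
      have hKp : IsSelfAdjoint (K ^ (2 ^ n)) := h.pow _
      have h2 : K ^ (2 ^ (n + 1)) = K ^ (2 ^ n) * K ^ (2 ^ n) := by
        rw [← pow_add]
        ring_nf
      rw [h2]
      calc ‖K ^ (2 ^ n) * K ^ (2 ^ n)‖
          = ‖star (K ^ (2 ^ n)) * K ^ (2 ^ n)‖ := by rw [hKp.star_eq]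
        _ = ‖K ^ (2 ^ n)‖ * ‖K ^ (2 ^ n)‖ := CStarRing.norm_star_mul_self
        _ = ‖K‖ ^ (2 ^ n) * ‖K‖ ^ (2 ^ n) := by rw [ih]
        _ = ‖K‖ ^ (2 ^ (n + 1)) := by rw [← pow_add]; ring_nf
  obtain ⟨n, hn⟩ : ∃ n : ℕ, k ≤ 2 ^ n := ⟨k, (Nat.lt_two_pow_self (n := k)).le⟩
  have h0 : K ^ (2 ^ n) = 0 := by
    calc K ^ (2 ^ n) = K ^ k * K ^ (2 ^ n - k) := by
          rw [← pow_add, Nat.add_sub_cancel' hn]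
      _ = 0 := by rw [hk, zero_mul]
  have h1 : ‖K‖ ^ (2 ^ n) = 0 := by rw [← key, h0, norm_zero]
  have h2 : ‖K‖ = 0 := pow_eq_zero_iff (by positivity) |>.mp h1
  exact norm_eq_zero.mp h2

lemma aux_star_aeval {S : H →L[ℂ] H} (hS : IsSelfAdjoint S) (p : ℂ[X]) :
    star (aeval S p) = aeval S (p.map (starRingEnd ℂ)) := by
  induction p using Polynomial.induction_on with
  | C a =>
    simp only [aeval_C, Polynomial.map_C, Algebra.algebraMap_eq_smul_one, star_smul, star_one]
    rfl
  | add p q hp hq => simp [hp, hq]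
  | monomial n a ih =>
    simp only [Polynomial.map_mul, Polynomial.map_C, Polynomial.map_pow, Polynomial.map_X,
      map_mul, aeval_C, map_pow, aeval_X, star_mul, star_pow, hS.star_eq]
    rw [Algebra.algebraMap_eq_smul_one, Algebra.algebraMap_eq_smul_one, star_smul, star_one]
    rw [mul_smul_comm, smul_mul_assoc, one_mul, mul_one]
    rfl

end Stmt12Aux

set_option maxHeartbeats 2000000 in
/-- If the group `Γ` generated by the self-adjoint unitaries `2P - 1` and `2Q - 1` (for
orthogonal projections `P, Q` with ranges `M, N`) is finite, then `(PQ)ⁿ` converges in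
operator norm to the orthogonal projection `Π` onto `M ∩ N`, `Π` equals the average
`(1/|Γ|) ∑_{γ ∈ Γ} γ`, and `H = (M ∩ N) ⊕ (M⊥ + N⊥)`. -/
theorem stmt_12 {H : Type*} [NormedAddCommGroup H] [InnerProductSpace ℂ H] [CompleteSpace H]
    (M N : Submodule ℂ H) (P Q : H →L[ℂ] H)
    (hP : ∀ x : H, P x ∈ M ∧ x - P x ∈ Mᗮ)
    (hQ : ∀ x : H, Q x ∈ N ∧ x - Q x ∈ Nᗮ)
    (Γ : Finset (H →L[ℂ] H))
    (hΓ : (Γ : Set (H →L[ℂ] H)) =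
      ((Submonoid.closure ({(2 : ℂ) • P - 1, (2 : ℂ) • Q - 1} : Set (H →L[ℂ] H)) :
        Submonoid (H →L[ℂ] H)) : Set (H →L[ℂ] H))) :
    (∀ R : H →L[ℂ] H, (∀ x : H, R x ∈ M ⊓ N ∧ x - R x ∈ (M ⊓ N)ᗮ) →
      Tendsto (fun n : ℕ => (P * Q) ^ n) atTop (𝓝 R) ∧
      R = ((Γ.card : ℂ)⁻¹) • ∑ γ ∈ Γ, γ) ∧
    IsCompl (M ⊓ N) (Mᗮ ⊔ Nᗮ) := by
  classical
  rcases subsingleton_or_nontrivial H with hH | hH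
  · have hCLM : Subsingleton (H →L[ℂ] H) :=
      ⟨fun f g => ContinuousLinearMap.ext fun x => Subsingleton.elim _ _⟩
    refine ⟨fun R _ => ⟨?_, Subsingleton.elim _ _⟩, ?_⟩
    · have : (fun n : ℕ => (P * Q) ^ n) = fun _ => R := funext fun n => Subsingleton.elim _ _
      rw [this]
      exact tendsto_const_nhds
    · constructor
      · rw [Submodule.disjoint_def]
        intro x _ _
        exact Subsingleton.elim x 0
      · rw [codisjoint_iff, eq_top_iff]
        intro x _
        have hx : x = 0 := Subsingleton.elim x 0
        rw [hx]
        exact Submodule.zero_mem _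
  -- nontrivial case
  haveI hCLMnt : Nontrivial (H →L[ℂ] H) := by
    refine nontrivial_of_ne 1 0 fun h => ?_
    obtain ⟨x, y, hxy⟩ := hH
    have hz : ∀ z : H, z = 0 := fun z => by
      calc z = (1 : H →L[ℂ] H) z := rfl
        _ = (0 : H →L[ℂ] H) z := by rw [h]
        _ = 0 := rfl
    exact hxy ((hz x).trans (hz y).symm)
  set A : H →L[ℂ] H := (2 : ℂ) • P - 1 with hAdef
  set B : H →L[ℂ] H := (2 : ℂ) • Q - 1 with hBdef
  have hPM : ∀ x, P x ∈ M := fun x => (hP x).1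
  have hPo : ∀ x, x - P x ∈ Mᗮ := fun x => (hP x).2
  have hQN : ∀ x, Q x ∈ N := fun x => (hQ x).1
  have hQo : ∀ x, x - Q x ∈ Nᗮ := fun x => (hQ x).2
  have horM : ∀ u v : H, u ∈ M → v ∈ Mᗮ → (inner ℂ u v : ℂ) = 0 := fun u v hu hv =>
    (Submodule.mem_orthogonal M v).mp hv u hu
  have horM' : ∀ u v : H, u ∈ M → v ∈ Mᗮ → (inner ℂ v u : ℂ) = 0 := fun u v hu hv =>
    (Submodule.mem_orthogonal' M v).mp hv u hu
  have horN : ∀ u v : H, u ∈ N → v ∈ Nᗮ → (inner ℂ u v : ℂ) = 0 := fun u v hu hv =>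
    (Submodule.mem_orthogonal N v).mp hv u hu
  have horN' : ∀ u v : H, u ∈ N → v ∈ Nᗮ → (inner ℂ v u : ℂ) = 0 := fun u v hu hv =>
    (Submodule.mem_orthogonal' N v).mp hv u hu
  have hMfix : ∀ x ∈ M, P x = x := by
    intro x hx
    have h1 : x - P x ∈ M := M.sub_mem hx (hPM x)
    have h2 : x - P x = 0 := by
      have := (Submodule.orthogonal_disjoint M).le_bot
        (Submodule.mem_inf.mpr ⟨h1, hPo x⟩)
      simpa using this
    exact (sub_eq_zero.mp h2).symm
  have hNfix : ∀ x ∈ N, Q x = x := by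
    intro x hx
    have h1 : x - Q x ∈ N := N.sub_mem hx (hQN x)
    have h2 : x - Q x = 0 := by
      have := (Submodule.orthogonal_disjoint N).le_bot
        (Submodule.mem_inf.mpr ⟨h1, hQo x⟩)
      simpa using this
    exact (sub_eq_zero.mp h2).symm
  have hPsym : ∀ x y : H, (inner ℂ (P x) y : ℂ) = inner ℂ x (P y) := by
    intro x y
    have h1 : (inner ℂ (P x) (y - P y) : ℂ) = 0 := horM _ _ (hPM x) (hPo y)
    have h2 : (inner ℂ (x - P x) (P y) : ℂ) = 0 := horM' _ _ (hPM y) (hPo x)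
    rw [inner_sub_right] at h1
    rw [inner_sub_left] at h2
    have e1 := sub_eq_zero.mp h1
    have e2 := sub_eq_zero.mp h2
    rw [e1, ← e2]
  have hQsym : ∀ x y : H, (inner ℂ (Q x) y : ℂ) = inner ℂ x (Q y) := by
    intro x y
    have h1 : (inner ℂ (Q x) (y - Q y) : ℂ) = 0 := horN _ _ (hQN x) (hQo y)
    have h2 : (inner ℂ (x - Q x) (Q y) : ℂ) = 0 := horN' _ _ (hQN y) (hQo x)
    rw [inner_sub_right] at h1
    rw [inner_sub_left] at h2
    have e1 := sub_eq_zero.mp h1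
    have e2 := sub_eq_zero.mp h2
    rw [e1, ← e2]
  have hPnormsq : ∀ x : H, ‖x‖ ^ 2 = ‖P x‖ ^ 2 + ‖x - P x‖ ^ 2 := by
    intro x
    have h0 : (inner ℂ (P x) (x - P x) : ℂ) = 0 := horM _ _ (hPM x) (hPo x)
    have h := norm_add_sq_eq_norm_sq_add_norm_sq_of_inner_eq_zero (P x) (x - P x) h0
    have e : P x + (x - P x) = x := by abel
    rw [e] at h
    rw [pow_two, pow_two, pow_two]
    exact h
  have hQnormsq : ∀ x : H, ‖x‖ ^ 2 = ‖Q x‖ ^ 2 + ‖x - Q x‖ ^ 2 := by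
    intro x
    have h0 : (inner ℂ (Q x) (x - Q x) : ℂ) = 0 := horN _ _ (hQN x) (hQo x)
    have h := norm_add_sq_eq_norm_sq_add_norm_sq_of_inner_eq_zero (Q x) (x - Q x) h0
    have e : Q x + (x - Q x) = x := by abel
    rw [e] at h
    rw [pow_two, pow_two, pow_two]
    exact h
  have hPle : ∀ x : H, ‖P x‖ ≤ ‖x‖ := by
    intro x
    nlinarith [hPnormsq x, norm_nonneg (P x), norm_nonneg x, norm_nonneg (x - P x)]
  have hQle : ∀ x : H, ‖Q x‖ ≤ ‖x‖ := by
    intro x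
    nlinarith [hQnormsq x, norm_nonneg (Q x), norm_nonneg x, norm_nonneg (x - Q x)]
  have hPeq : ∀ x : H, ‖P x‖ = ‖x‖ → P x = x := by
    intro x hx
    have h1 : ‖x - P x‖ ^ 2 = 0 := by
      have h := hPnormsq x
      rw [hx] at h
      linarith
    have h2 : x - P x = 0 := by
      rw [pow_eq_zero_iff two_ne_zero] at h1
      exact norm_eq_zero.mp h1
    exact (sub_eq_zero.mp h2).symm
  have hQeq : ∀ x : H, ‖Q x‖ = ‖x‖ → Q x = x := by
    intro x hx
    have h1 : ‖x - Q x‖ ^ 2 = 0 := by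
      have h := hQnormsq x
      rw [hx] at h
      linarith
    have h2 : x - Q x = 0 := by
      rw [pow_eq_zero_iff two_ne_zero] at h1
      exact norm_eq_zero.mp h1
    exact (sub_eq_zero.mp h2).symm
  have hPPapp : ∀ x, P (P x) = P x := fun x => hMfix _ (hPM x)
  have hPP : P * P = P := by
    ext x
    show P (P x) = P x
    exact hPPapp x
  have hQQapp : ∀ x, Q (Q x) = Q x := fun x => hNfix _ (hQN x)
  have hPsa : IsSelfAdjoint P :=
    ContinuousLinearMap.isSelfAdjoint_iff_isSymmetric.mpr fun x y => hPsym x y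
  have hQsa : IsSelfAdjoint Q :=
    ContinuousLinearMap.isSelfAdjoint_iff_isSymmetric.mpr fun x y => hQsym x y
  have hAapp : ∀ x, A x = (2 : ℂ) • P x - x := by
    intro x
    rw [hAdef]
    simp [ContinuousLinearMap.sub_apply, ContinuousLinearMap.smul_apply,
      ContinuousLinearMap.one_apply]
  have hBapp : ∀ x, B x = (2 : ℂ) • Q x - x := by
    intro x
    rw [hBdef]
    simp [ContinuousLinearMap.sub_apply, ContinuousLinearMap.smul_apply,
      ContinuousLinearMap.one_apply]
  -- closure facts
  have hfix1 : ∀ g ∈ Submonoid.closure ({A, B} : Set (H →L[ℂ] H)),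
      ∀ x, x ∈ M → x ∈ N → g x = x := by
    intro g hg
    induction hg using Submonoid.closure_induction with
    | mem g hgs =>
      simp only [Set.mem_insert_iff, Set.mem_singleton_iff] at hgs
      rcases hgs with rfl | rfl
      · intro x hxM _
        rw [hAapp, hMfix x hxM]
        module
      · intro x _ hxN
        rw [hBapp, hNfix x hxN]
        module
    | one => intro x _ _; rfl
    | mul g₁ g₂ hg₁ hg₂ ih₁ ih₂ =>
      intro x hxM hxN
      rw [ContinuousLinearMap.mul_apply, ih₂ x hxM hxN, ih₁ x hxM hxN]
  have hinner : ∀ g ∈ Submonoid.closure ({A, B} : Set (H →L[ℂ] H)),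
      ∀ y, y ∈ M → y ∈ N → ∀ x, (inner ℂ y (g x) : ℂ) = inner ℂ y x := by
    intro g hg
    induction hg using Submonoid.closure_induction with
    | mem g hgs =>
      simp only [Set.mem_insert_iff, Set.mem_singleton_iff] at hgs
      rcases hgs with rfl | rfl
      · intro y hyM _ x
        have h0 : (inner ℂ y (x - P x) : ℂ) = 0 := horM _ _ hyM (hPo x)
        rw [inner_sub_right] at h0
        have e0 := sub_eq_zero.mp h0
        rw [hAapp, inner_sub_right, inner_smul_right, ← e0]
        ring
      · intro y _ hyN x
        have h0 : (inner ℂ y (x - Q x) : ℂ) = 0 := horN _ _ hyN (hQo x)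
        rw [inner_sub_right] at h0
        have e0 := sub_eq_zero.mp h0
        rw [hBapp, inner_sub_right, inner_smul_right, ← e0]
        ring
    | one => intro y _ _ x; rfl
    | mul g₁ g₂ hg₁ hg₂ ih₁ ih₂ =>
      intro y hyM hyN x
      rw [ContinuousLinearMap.mul_apply, ih₁ y hyM hyN (g₂ x), ih₂ y hyM hyN x]
  have hdiff : ∀ g ∈ Submonoid.closure ({A, B} : Set (H →L[ℂ] H)),
      ∀ x, x - g x ∈ Mᗮ ⊔ Nᗮ := by
    intro g hg
    induction hg using Submonoid.closure_induction with
    | mem g hgs =>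
      simp only [Set.mem_insert_iff, Set.mem_singleton_iff] at hgs
      rcases hgs with rfl | rfl
      · intro x
        have h0 : x - A x = (2 : ℂ) • (x - P x) := by rw [hAapp]; module
        rw [h0]
        exact Submodule.mem_sup_left (Submodule.smul_mem _ _ (hPo x))
      · intro x
        have h0 : x - B x = (2 : ℂ) • (x - Q x) := by rw [hBapp]; module
        rw [h0]
        exact Submodule.mem_sup_right (Submodule.smul_mem _ _ (hQo x))
    | one => intro x; simp
    | mul g₁ g₂ hg₁ hg₂ ih₁ ih₂ =>
      intro x
      have h0 : x - (g₁ * g₂) x = (x - g₂ x) + (g₂ x - g₁ (g₂ x)) := by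
        rw [ContinuousLinearMap.mul_apply]; abel
      rw [h0]
      exact Submodule.add_mem _ (ih₂ x) (ih₁ (g₂ x))
  have hmemΓ : ∀ g : H →L[ℂ] H,
      g ∈ Γ ↔ g ∈ Submonoid.closure ({A, B} : Set (H →L[ℂ] H)) := by
    intro g
    have := Set.ext_iff.mp hΓ g
    simpa using this
  have hAcl : A ∈ Submonoid.closure ({A, B} : Set (H →L[ℂ] H)) :=
    Submonoid.subset_closure (by simp)
  have hBcl : B ∈ Submonoid.closure ({A, B} : Set (H →L[ℂ] H)) :=
    Submonoid.subset_closure (by simp)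
  have h1Γ : (1 : H →L[ℂ] H) ∈ Γ := (hmemΓ 1).mpr (one_mem _)
  have hcard0 : Γ.card ≠ 0 := Finset.card_ne_zero_of_mem h1Γ
  have hcardC : (Γ.card : ℂ) ≠ 0 := Nat.cast_ne_zero.mpr hcard0
  have hAA : A * A = 1 := by
    ext x
    have h1 : A (A x) = (2 : ℂ) • P (A x) - A x := hAapp _
    rw [ContinuousLinearMap.mul_apply, ContinuousLinearMap.one_apply, h1, hAapp x,
      map_sub, map_smul, hPPapp]
    module
  have hBB : B * B = 1 := by
    ext x
    have h1 : B (B x) = (2 : ℂ) • Q (B x) - B x := hBapp _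
    rw [ContinuousLinearMap.mul_apply, ContinuousLinearMap.one_apply, h1, hBapp x,
      map_sub, map_smul, hQQapp]
    module
  have hsumA : ∑ γ ∈ Γ, A * γ = ∑ γ ∈ Γ, γ := by
    apply Finset.sum_nbij' (i := fun γ => A * γ) (j := fun γ => A * γ)
    · intro γ hγ
      exact (hmemΓ _).mpr (mul_mem hAcl ((hmemΓ γ).mp hγ))
    · intro γ hγ
      exact (hmemΓ _).mpr (mul_mem hAcl ((hmemΓ γ).mp hγ))
    · intro γ _
      rw [← mul_assoc, hAA, one_mul]
    · intro γ _
      rw [← mul_assoc, hAA, one_mul]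
    · intro γ _
      rfl
  have hsumB : ∑ γ ∈ Γ, B * γ = ∑ γ ∈ Γ, γ := by
    apply Finset.sum_nbij' (i := fun γ => B * γ) (j := fun γ => B * γ)
    · intro γ hγ
      exact (hmemΓ _).mpr (mul_mem hBcl ((hmemΓ γ).mp hγ))
    · intro γ hγ
      exact (hmemΓ _).mpr (mul_mem hBcl ((hmemΓ γ).mp hγ))
    · intro γ _
      rw [← mul_assoc, hBB, one_mul]
    · intro γ _
      rw [← mul_assoc, hBB, one_mul]
    · intro γ _
      rfl
  set E : H →L[ℂ] H := ((Γ.card : ℂ)⁻¹) • ∑ γ ∈ Γ, γ with hEdef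
  have hAE : A * E = E := by
    rw [hEdef, mul_smul_comm, Finset.mul_sum, hsumA]
  have hBE : B * E = E := by
    rw [hEdef, mul_smul_comm, Finset.mul_sum, hsumB]
  have hEMN : ∀ x, E x ∈ M ⊓ N := by
    intro x
    have hA' : A (E x) = E x := by
      rw [← ContinuousLinearMap.mul_apply, hAE]
    have hB' : B (E x) = E x := by
      rw [← ContinuousLinearMap.mul_apply, hBE]
    rw [hAapp] at hA'
    rw [hBapp] at hB'
    have h3 : (2 : ℂ) • P (E x) = (2 : ℂ) • E x := by
      rw [sub_eq_iff_eq_add] at hA'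
      rw [hA']
      module
    have h4 : (2 : ℂ) • Q (E x) = (2 : ℂ) • E x := by
      rw [sub_eq_iff_eq_add] at hB'
      rw [hB']
      module
    have h5 : P (E x) = E x := smul_right_injective H two_ne_zero h3
    have h6 : Q (E x) = E x := smul_right_injective H two_ne_zero h4
    exact Submodule.mem_inf.mpr ⟨h5 ▸ hPM (E x), h6 ▸ hQN (E x)⟩
  have hExapp : ∀ x, E x = ((Γ.card : ℂ)⁻¹) • ∑ γ ∈ Γ, γ x := by
    intro x
    rw [hEdef]
    simp [ContinuousLinearMap.smul_apply, ContinuousLinearMap.sum_apply]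
  have hEorth : ∀ x, x - E x ∈ (M ⊓ N)ᗮ := by
    intro x
    rw [Submodule.mem_orthogonal]
    intro y hy
    have hyM : y ∈ M := hy.1
    have hyN : y ∈ N := hy.2
    rw [inner_sub_right, hExapp, inner_smul_right, inner_sum]
    have hc : ∀ γ ∈ Γ, (inner ℂ y (γ x) : ℂ) = inner ℂ y x := fun γ hγ =>
      hinner γ ((hmemΓ γ).mp hγ) y hyM hyN x
    rw [Finset.sum_congr rfl hc, Finset.sum_const, nsmul_eq_mul]
    field_simp
    simp
  have huniq : ∀ R1 R2 : H →L[ℂ] H,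
      (∀ x, R1 x ∈ M ⊓ N ∧ x - R1 x ∈ (M ⊓ N)ᗮ) →
      (∀ x, R2 x ∈ M ⊓ N ∧ x - R2 x ∈ (M ⊓ N)ᗮ) → R1 = R2 := by
    intro R1 R2 h1 h2
    ext x
    have hmem : R1 x - R2 x ∈ M ⊓ N := Submodule.sub_mem _ (h1 x).1 (h2 x).1
    have horth : R1 x - R2 x ∈ (M ⊓ N)ᗮ := by
      have he : R1 x - R2 x = (x - R2 x) - (x - R1 x) := by abel
      rw [he]
      exact Submodule.sub_mem _ (h2 x).2 (h1 x).2
    have h0 := (Submodule.orthogonal_disjoint (M ⊓ N)).le_bot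
      (Submodule.mem_inf.mpr ⟨hmem, horth⟩)
    have h0' : R1 x - R2 x = 0 := by simpa using h0
    exact sub_eq_zero.mp h0'
  -- the operator S = PQP
  set S : H →L[ℂ] H := P * Q * P with hSdef
  have hSapp : ∀ x, S x = P (Q (P x)) := fun x => rfl
  have hSsa : IsSelfAdjoint S := by
    rw [hSdef]
    show star (P * Q * P) = P * Q * P
    rw [star_mul, star_mul, hPsa.star_eq, hQsa.star_eq, mul_assoc]
  -- S is integral, being a member of a finite-dimensional algebra
  have hfg : (Subalgebra.toSubmodule
      (Algebra.adjoin ℂ ({A, B} : Set (H →L[ℂ] H)))).FG := by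
    rw [Algebra.adjoin_eq_span]
    have he : ((Submonoid.closure ({A, B} : Set (H →L[ℂ] H)) : Submonoid _) :
        Set (H →L[ℂ] H)) = ↑Γ := hΓ.symm
    rw [he]
    exact Submodule.fg_span Γ.finite_toSet
  have hPadj : P ∈ Algebra.adjoin ℂ ({A, B} : Set (H →L[ℂ] H)) := by
    have hA' : A ∈ Algebra.adjoin ℂ ({A, B} : Set (H →L[ℂ] H)) :=
      Algebra.subset_adjoin (by simp)
    have hform : P = (2⁻¹ : ℂ) • (A + 1) := by
      rw [hAdef]
      ext x
      simp [ContinuousLinearMap.smul_apply, ContinuousLinearMap.add_apply,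
        ContinuousLinearMap.sub_apply, ContinuousLinearMap.one_apply, smul_sub, smul_smul]
    rw [hform]
    exact Subalgebra.smul_mem _ (add_mem hA' (one_mem _)) _
  have hQadj : Q ∈ Algebra.adjoin ℂ ({A, B} : Set (H →L[ℂ] H)) := by
    have hB' : B ∈ Algebra.adjoin ℂ ({A, B} : Set (H →L[ℂ] H)) :=
      Algebra.subset_adjoin (by simp)
    have hform : Q = (2⁻¹ : ℂ) • (B + 1) := by
      rw [hBdef]
      ext x
      simp [ContinuousLinearMap.smul_apply, ContinuousLinearMap.add_apply,
        ContinuousLinearMap.sub_apply, ContinuousLinearMap.one_apply, smul_sub, smul_smul]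
    rw [hform]
    exact Subalgebra.smul_mem _ (add_mem hB' (one_mem _)) _
  have hSadjoin : S ∈ Algebra.adjoin ℂ ({A, B} : Set (H →L[ℂ] H)) :=
    mul_mem (mul_mem hPadj hQadj) hPadj
  have hint : IsIntegral ℂ S := IsIntegral.of_mem_of_fg _ hfg S hSadjoin
  obtain ⟨f, hfm, hfeval0⟩ := hint
  have hfeval : aeval S f = 0 := by rwa [aeval_def]
  have hsplit : f = (f.roots.map fun a => X - C a).prod :=
    (IsAlgClosed.splits f).eq_prod_roots_of_monic hfm
  set t : Finset ℂ := f.roots.toFinset with htdef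
  set g : ℂ[X] := ∏ μ ∈ t, (X - C μ) with hgdef
  set k : ℕ := Multiset.card f.roots with hkdef
  have hdvd : f ∣ g ^ k := by
    have hle : f.roots ≤ k • t.val := by
      rw [Multiset.le_iff_count]
      intro a
      rw [Multiset.count_nsmul]
      have hval : t.val = f.roots.dedup := by rw [htdef]; rfl
      rw [hval, Multiset.count_dedup]
      by_cases ha : a ∈ f.roots
      · rw [if_pos ha, mul_one]
        exact Multiset.count_le_card a f.roots
      · rw [if_neg ha, mul_zero]
        exact le_of_eq (Multiset.count_eq_zero.mpr ha)
    calc f = (f.roots.map fun a => X - C a).prod := hsplit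
      _ ∣ ((k • t.val).map fun a => X - C a).prod :=
          Multiset.prod_dvd_prod_of_le (Multiset.map_le_map hle)
      _ = ((t.val.map fun a => X - C a).prod) ^ k := by
          rw [Multiset.map_nsmul, Multiset.prod_nsmul]
      _ = g ^ k := by rw [hgdef, Finset.prod_eq_multiset_prod]
  have hNk : (aeval S g) ^ k = 0 := by
    obtain ⟨c, hc⟩ := hdvd
    rw [← map_pow, hc, map_mul, hfeval, zero_mul]
  have hstarN : star (aeval S g) = aeval S (g.map (starRingEnd ℂ)) := aux_star_aeval hSsa g
  have hKsa : IsSelfAdjoint (star (aeval S g) * aeval S g) := IsSelfAdjoint.star_mul_self _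
  have hcomm : Commute (star (aeval S g)) (aeval S g) := by
    rw [hstarN]
    show _ * _ = _ * _
    rw [← map_mul, ← map_mul, mul_comm]
  have hKk : (star (aeval S g) * aeval S g) ^ k = 0 := by
    rw [hcomm.mul_pow, hNk, mul_zero]
  have hK0 : star (aeval S g) * aeval S g = 0 := aux_selfadj_nilpotent hKsa hKk
  have hg0 : aeval S g = 0 := by
    have h1 : ‖aeval S g‖ * ‖aeval S g‖ = 0 := by
      rw [← CStarRing.norm_star_mul_self, hK0, norm_zero]
    exact norm_eq_zero.mp (mul_self_eq_zero.mp h1)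
  have htne : t.Nonempty := by
    by_contra hte
    rw [Finset.not_nonempty_iff_eq_empty] at hte
    have hroots : f.roots = 0 := by
      rw [htdef] at hte
      rwa [Multiset.toFinset_eq_empty] at hte
    have hf1 : f = 1 := by rw [hsplit, hroots]; simp
    rw [hf1] at hfeval
    rw [map_one] at hfeval
    exact one_ne_zero hfeval
  -- Lagrange spectral projections
  set Ep : ℂ → (H →L[ℂ] H) := fun μ => aeval S (Lagrange.basis t id μ) with hEpdef
  have hsum1 : ∑ μ ∈ t, Ep μ = 1 := by
    rw [hEpdef, ← map_sum, Lagrange.sum_basis (Set.injOn_id _) htne, map_one]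
  have hSE : ∀ μ ∈ t, S * Ep μ = μ • Ep μ := by
    intro μ hμ
    have hg' : g = (X - C μ) * ∏ ν ∈ t.erase μ, (X - C ν) :=
      (Finset.mul_prod_erase t _ hμ).symm
    have hbasis : Lagrange.basis t id μ
        = C (∏ ν ∈ t.erase μ, (μ - ν)⁻¹) * ∏ ν ∈ t.erase μ, (X - C ν) := by
      rw [Lagrange.basis]
      simp only [Lagrange.basisDivisor, id_eq]
      rw [Finset.prod_mul_distrib]
      congr 1
      rw [map_prod]
    have hkey : (X - C μ) * Lagrange.basis t id μ
        = C (∏ ν ∈ t.erase μ, (μ - ν)⁻¹) * g := by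
      rw [hbasis, hg']
      ring
    have h0 : aeval S ((X - C μ) * Lagrange.basis t id μ) = 0 := by
      rw [hkey, map_mul, hg0, mul_zero]
    rw [map_mul, map_sub, aeval_X, aeval_C] at h0
    have h1 : S * Ep μ - algebraMap ℂ (H →L[ℂ] H) μ * Ep μ = 0 := by
      rw [← sub_mul]
      exact h0
    have h2 : algebraMap ℂ (H →L[ℂ] H) μ * Ep μ = μ • Ep μ := by
      rw [Algebra.algebraMap_eq_smul_one, smul_mul_assoc, one_mul]
    rw [h2] at h1
    exact sub_eq_zero.mp h1
  have hSnE : ∀ (n : ℕ), ∀ μ ∈ t, S ^ n * Ep μ = (μ ^ n) • Ep μ := by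
    intro n
    induction n with
    | zero => intro μ hμ; simp
    | succ n ih =>
      intro μ hμ
      rw [pow_succ, mul_assoc, hSE μ hμ, mul_smul_comm, ih μ hμ, smul_smul]
      congr 1
      ring
  have hSn : ∀ n : ℕ, S ^ n = ∑ μ ∈ t, (μ ^ n) • Ep μ := by
    intro n
    calc S ^ n = S ^ n * ∑ μ ∈ t, Ep μ := by rw [hsum1, mul_one]
      _ = ∑ μ ∈ t, S ^ n * Ep μ := Finset.mul_sum _ _ _
      _ = ∑ μ ∈ t, (μ ^ n) • Ep μ := Finset.sum_congr rfl fun μ hμ => hSnE n μ hμ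
  -- fixed vectors of S lie in M ⊓ N
  have hfixS : ∀ y : H, S y = y → (P y = y ∧ Q y = y) := by
    intro y hy
    rw [hSapp] at hy
    have c1 : ‖y‖ ≤ ‖Q (P y)‖ := by
      calc ‖y‖ = ‖P (Q (P y))‖ := by rw [hy]
        _ ≤ ‖Q (P y)‖ := hPle _
    have c2 : ‖Q (P y)‖ ≤ ‖P y‖ := hQle _
    have c3 : ‖P y‖ ≤ ‖y‖ := hPle _
    have hPy : P y = y := hPeq y (le_antisymm c3 (le_trans c1 c2))
    refine ⟨hPy, ?_⟩
    apply hQeq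
    rw [hPy] at c1
    exact le_antisymm (hQle y) c1
  -- eigenvalue bounds
  have heig : ∀ μ ∈ t, Ep μ ≠ 0 → μ ≠ 1 → ‖μ‖ < 1 := by
    intro μ hμ hE hne
    obtain ⟨x, hx⟩ : ∃ x, Ep μ x ≠ 0 := by
      by_contra hax
      push_neg at hax
      exact hE (ContinuousLinearMap.ext fun x => by rw [hax x]; rfl)
    set y := Ep μ x with hydef
    have hy : S y = μ • y := by
      have h0 : (S * Ep μ) x = (μ • Ep μ) x := by rw [hSE μ hμ]
      rwa [ContinuousLinearMap.mul_apply, ContinuousLinearMap.smul_apply] at h0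
    have hinner1 : (inner ℂ y (S y) : ℂ) = μ * (‖y‖ : ℂ) ^ 2 := by
      rw [hy, inner_smul_right, inner_self_eq_norm_sq_to_K]
      rfl
    have hinner2 : (inner ℂ y (S y) : ℂ) = (‖Q (P y)‖ : ℂ) ^ 2 := by
      rw [hSapp]
      have e0 : Q (P y) + (P y - Q (P y)) = P y := by abel
      calc (inner ℂ y (P (Q (P y))) : ℂ) = inner ℂ (P y) (Q (P y)) := (hPsym y (Q (P y))).symm
        _ = inner ℂ (Q (P y) + (P y - Q (P y))) (Q (P y)) := by rw [e0]
        _ = inner ℂ (Q (P y)) (Q (P y)) + inner ℂ (P y - Q (P y)) (Q (P y)) :=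
            inner_add_left _ _ _
        _ = (‖Q (P y)‖ : ℂ) ^ 2 := by
            rw [horN' _ _ (hQN (P y)) (hQo (P y)), add_zero, inner_self_eq_norm_sq_to_K]
            rfl
    have hmain : μ * (‖y‖ : ℂ) ^ 2 = (‖Q (P y)‖ : ℂ) ^ 2 := by rw [← hinner1, hinner2]
    have hy0 : y ≠ 0 := hx
    have hyn0 : ‖y‖ ≠ 0 := fun h => hy0 (norm_eq_zero.mp h)
    have hylt : ‖Q (P y)‖ < ‖y‖ := by
      rcases lt_or_ge ‖Q (P y)‖ ‖y‖ with hlt | hge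
      · exact hlt
      · exfalso
        have c2 : ‖Q (P y)‖ ≤ ‖P y‖ := hQle _
        have c3 : ‖P y‖ ≤ ‖y‖ := hPle _
        have hPy : P y = y := hPeq y (le_antisymm c3 (le_trans hge c2))
        have hQy : Q y = y := by
          apply hQeq
          rw [hPy] at hge
          exact le_antisymm (hQle y) hge
        have hy1 : P (Q (P y)) = y := by rw [hPy, hQy, hPy]
        have hy2 : μ • y = y := by rw [← hy, hSapp, hy1]
        have hy3 : (μ - 1) • y = 0 := by rw [sub_smul, one_smul, hy2, sub_self]
        rcases smul_eq_zero.mp hy3 with h | h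
        · exact hne (by rwa [sub_eq_zero] at h)
        · exact hy0 h
    have hsq : ‖Q (P y)‖ ^ 2 < ‖y‖ ^ 2 := by
      gcongr
    have hypos : 0 < ‖y‖ ^ 2 := by
      have h0 : 0 < ‖y‖ := (norm_nonneg y).lt_of_ne' (by simpa using hyn0)
      positivity
    have hμval : μ = ((‖Q (P y)‖ ^ 2 / ‖y‖ ^ 2 : ℝ) : ℂ) := by
      have hs : ((‖y‖ : ℝ) : ℂ) ≠ 0 := Complex.ofReal_ne_zero.mpr hyn0
      push_cast
      rw [eq_div_iff (pow_ne_zero 2 hs)]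
      exact hmain
    rw [hμval, Complex.norm_real, Real.norm_eq_abs, abs_of_nonneg (by positivity)]
    rw [div_lt_one hypos]
    exact hsq
  -- the limit projection of S ^ n
  set Pi : H →L[ℂ] H := if (1 : ℂ) ∈ t then Ep 1 else 0 with hPidef
  have htendS : Tendsto (fun n : ℕ => S ^ n) atTop (𝓝 Pi) := by
    have hfun : (fun n : ℕ => S ^ n) = fun n : ℕ => ∑ μ ∈ t, (μ ^ n) • Ep μ := funext hSn
    rw [hfun]
    have hlim : Pi = ∑ μ ∈ t, (if μ = 1 then Ep μ else 0) := by
      rw [Finset.sum_ite_eq' t (1 : ℂ) (fun μ => Ep μ), hPidef]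
    rw [hlim]
    apply tendsto_finset_sum
    intro μ hμ
    by_cases h1 : μ = 1
    · subst h1
      rw [if_pos rfl]
      simp only [one_pow, one_smul]
      exact tendsto_const_nhds
    · rw [if_neg h1]
      by_cases hE : Ep μ = 0
      · simp only [hE, smul_zero]
        exact tendsto_const_nhds
      · have hlt : ‖μ‖ < 1 := heig μ hμ hE h1
        have h2 := (tendsto_pow_atTop_nhds_zero_of_norm_lt_one hlt).smul_const (Ep μ)
        simpa using h2
  have hSPQ : ∀ n : ℕ, S ^ n * (P * Q) = (P * Q) ^ (n + 1) := by
    intro n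
    induction n with
    | zero => rw [pow_zero, one_mul, pow_one]
    | succ n ih =>
      have hstep : S * (P * Q) = (P * Q) * (P * Q) := by
        rw [hSdef, mul_assoc (P * Q) P (P * Q), ← mul_assoc P P Q, hPP]
      calc S ^ (n + 1) * (P * Q) = S ^ n * (S * (P * Q)) := by
            rw [pow_succ, mul_assoc]
        _ = S ^ n * ((P * Q) * (P * Q)) := by rw [hstep]
        _ = (S ^ n * (P * Q)) * (P * Q) := by rw [← mul_assoc]
        _ = (P * Q) ^ (n + 1) * (P * Q) := by rw [ih]
        _ = (P * Q) ^ (n + 2) := by rw [← pow_succ]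
  set L : H →L[ℂ] H := Pi * (P * Q) with hLdef
  have htendPQ : Tendsto (fun n : ℕ => (P * Q) ^ n) atTop (𝓝 L) := by
    have h1 : Tendsto (fun n : ℕ => S ^ n * (P * Q)) atTop (𝓝 L) := htendS.mul_const _
    have h2 : Tendsto (fun n : ℕ => (P * Q) ^ (n + 1)) atTop (𝓝 L) := by
      rw [show (fun n : ℕ => (P * Q) ^ (n + 1)) = fun n : ℕ => S ^ n * (P * Q) from
        funext fun n => (hSPQ n).symm]
      exact h1
    exact (tendsto_add_atTop_iff_nat 1).mp h2
  have hPimem : ∀ z : H, Pi z ∈ M ⊓ N := by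
    intro z
    by_cases h1t : (1 : ℂ) ∈ t
    · have hSPi : S * Pi = Pi := by
        rw [hPidef, if_pos h1t, hSE 1 h1t, one_smul]
      have hfix : S (Pi z) = Pi z := by
        have h0 : (S * Pi) z = Pi z := by rw [hSPi]
        rwa [ContinuousLinearMap.mul_apply] at h0
      obtain ⟨h1, h2⟩ := hfixS _ hfix
      exact Submodule.mem_inf.mpr ⟨h1 ▸ hPM (Pi z), h2 ▸ hQN (Pi z)⟩
    · have h0 : Pi z = 0 := by rw [hPidef, if_neg h1t]; rfl
      rw [h0]
      exact Submodule.zero_mem _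
  -- final assembly
  refine ⟨?_, ?_⟩
  · intro R hR
    have hR0 : ∀ z ∈ (M ⊓ N)ᗮ, R z = 0 := by
      intro z hz
      have hmem : R z ∈ M ⊓ N := (hR z).1
      have horth : R z ∈ (M ⊓ N)ᗮ := by
        have he : R z = z - (z - R z) := by abel
        rw [he]
        exact Submodule.sub_mem _ hz (hR z).2
      have h0 := (Submodule.orthogonal_disjoint (M ⊓ N)).le_bot
        (Submodule.mem_inf.mpr ⟨hmem, horth⟩)
      simpa using h0
    have hRid : ∀ z, z ∈ M ⊓ N → R z = z := by
      intro z hz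
      have hmem : z - R z ∈ M ⊓ N := Submodule.sub_mem _ hz (hR z).1
      have h0 := (Submodule.orthogonal_disjoint (M ⊓ N)).le_bot
        (Submodule.mem_inf.mpr ⟨hmem, (hR z).2⟩)
      have h0' : z - R z = 0 := by simpa using h0
      exact (sub_eq_zero.mp h0').symm
    have hRP : ∀ x, R (P x) = R x := by
      intro x
      have hmem : P x - x ∈ (M ⊓ N)ᗮ := by
        have h0 : P x - x = -(x - P x) := by abel
        rw [h0]
        exact Submodule.orthogonal_le inf_le_left (Submodule.neg_mem _ (hPo x))
      have h1 : R (P x - x) = 0 := hR0 _ hmem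
      rw [map_sub] at h1
      have := sub_eq_zero.mp h1
      exact this
    have hRQ : ∀ x, R (Q x) = R x := by
      intro x
      have hmem : Q x - x ∈ (M ⊓ N)ᗮ := by
        have h0 : Q x - x = -(x - Q x) := by abel
        rw [h0]
        exact Submodule.orthogonal_le inf_le_right (Submodule.neg_mem _ (hQo x))
      have h1 : R (Q x - x) = 0 := hR0 _ hmem
      rw [map_sub] at h1
      have := sub_eq_zero.mp h1
      exact this
    have hRPQ : R * (P * Q) = R := by
      ext x
      calc (R * (P * Q)) x = R (P (Q x)) := rfl
        _ = R (Q x) := hRP _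
        _ = R x := hRQ _
    have hRpow : ∀ n : ℕ, R * (P * Q) ^ (n + 1) = R := by
      intro n
      induction n with
      | zero => rw [pow_one]; exact hRPQ
      | succ n ih => rw [pow_succ, ← mul_assoc, ih, hRPQ]
    have hRL : R * L = R := by
      have t1 : Tendsto (fun n : ℕ => R * (P * Q) ^ (n + 1)) atTop (𝓝 (R * L)) := by
        apply Tendsto.const_mul
        exact (tendsto_add_atTop_iff_nat 1).mpr htendPQ
      have t2 : Tendsto (fun n : ℕ => R * (P * Q) ^ (n + 1)) atTop (𝓝 R) := by
        rw [show (fun n : ℕ => R * (P * Q) ^ (n + 1)) = fun _ => R from funext hRpow]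
        exact tendsto_const_nhds
      exact tendsto_nhds_unique t1 t2
    have hRLL : R * L = L := by
      ext x
      calc (R * L) x = R (L x) := rfl
        _ = L x := hRid _ (by
            have he : L x = Pi (P (Q x)) := rfl
            rw [he]
            exact hPimem _)
    have hLR : L = R := hRLL.symm.trans hRL
    refine ⟨?_, ?_⟩
    · rw [← hLR]
      exact htendPQ
    · exact huniq R E hR fun x => ⟨hEMN x, hEorth x⟩
  · constructor
    · rw [Submodule.disjoint_def]
      intro x hx1 hx2
      have hsub : Mᗮ ⊔ Nᗮ ≤ (M ⊓ N)ᗮ :=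
        sup_le (Submodule.orthogonal_le inf_le_left) (Submodule.orthogonal_le inf_le_right)
      have h0 := (Submodule.orthogonal_disjoint (M ⊓ N)).le_bot
        (Submodule.mem_inf.mpr ⟨hx1, hsub hx2⟩)
      simpa using h0
    · rw [codisjoint_iff, eq_top_iff]
      intro x _
      have h1 : E x ∈ M ⊓ N := hEMN x
      have h2 : x - E x ∈ Mᗮ ⊔ Nᗮ := by
        have hEx2 : x - E x = ((Γ.card : ℂ)⁻¹) • ∑ γ ∈ Γ, (x - γ x) := by
          rw [Finset.sum_sub_distrib, Finset.sum_const, smul_sub, ← Nat.cast_smul_eq_nsmul ℂ,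
            smul_smul, inv_mul_cancel₀ hcardC, one_smul, hExapp]
        rw [hEx2]
        apply Submodule.smul_mem
        apply Submodule.sum_mem
        intro γ hγ
        exact hdiff γ ((hmemΓ γ).mp hγ) x
      have h3 := Submodule.add_mem_sup h1 h2
      have h4 : E x + (x - E x) = x := by abel
      rwa [h4] at h3
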